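/- Let q be a real number, and let n ≥ 1 and k ≥ 1 be integers. Then ∑_{h=1}^n (n-h)^k q^{n-h} ∏_{j=1}^{h-1} (1 - q^{n-j}) = n^k - a_{n,k}(q), where a_{n,k}(q) = ∑_{i=1}^n f_k(i) ∏_{j=i}^{n-1} (1 - q^j) and f_k(i) = ∑_{j=1}^k binom(k,j) (-1)^{j-1} i^{k-j}. -/

import Mathlib

/-- For every real `q` and integers `n ≥ 1`, `k ≥ 1`,
`∑_{h=1}^n (n-h)^k q^{n-h} ∏_{j=1}^{h-1} (1 - q^{n-j}) = n^k - a_{n,k}(q)`, where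
`a_{n,k}(q) = ∑_{i=1}^n f_k(i) ∏_{j=i}^{n-1} (1 - q^j)` and
`f_k(i) = ∑_{j=1}^k binom(k,j) (-1)^{j-1} i^{k-j}`. -/
theorem centered_moment_eq (q : ℝ) (n k : ℕ) (hn : 1 ≤ n) (hk : 1 ≤ k)
    (f : ℕ → ℕ → ℝ)
    (hf : ∀ l i : ℕ, f l i =
      ∑ j ∈ Finset.Icc 1 l, (l.choose j : ℝ) * (-1) ^ (j - 1) * (i : ℝ) ^ (l - j))
    (a : ℕ → ℕ → ℝ)
    (ha : ∀ m l : ℕ, a m l =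
      ∑ i ∈ Finset.Icc 1 m, f l i * ∏ j ∈ Finset.Icc i (m - 1), (1 - q ^ j)) :
    ∑ h ∈ Finset.Icc 1 n, ((n - h : ℕ) : ℝ) ^ k * q ^ (n - h) *
        ∏ j ∈ Finset.Icc 1 (h - 1), (1 - q ^ (n - j))
    = (n : ℝ) ^ k - a n k := by
  -- the binomial key: f_k(x) = x^k - (x-1)^k
  have key : ∀ x : ℝ,
      ∑ j ∈ Finset.Icc 1 k, (k.choose j : ℝ) * (-1) ^ (j - 1) * x ^ (k - j)
        = x ^ k - (x - 1) ^ k := by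
    intro x
    have hb : (x - 1) ^ k
        = ∑ m ∈ Finset.range (k + 1), (-1 : ℝ) ^ m * x ^ (k - m) * (k.choose m : ℝ) := by
      rw [← neg_add_eq_sub]
      exact add_pow (-1 : ℝ) x k
    rw [hb, Finset.sum_range_succ']
    have hL : ∑ j ∈ Finset.Icc 1 k, (k.choose j : ℝ) * (-1) ^ (j - 1) * x ^ (k - j)
        = ∑ m ∈ Finset.range k,
            (k.choose (m + 1) : ℝ) * (-1) ^ m * x ^ (k - (m + 1)) := by
      refine Finset.sum_nbij' (fun j => j - 1) (fun m => m + 1) ?_ ?_ ?_ ?_ ?_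
      · intro j hj; simp only [Finset.mem_Icc] at hj; simp only [Finset.mem_range]; omega
      · intro m hm; simp only [Finset.mem_range] at hm; simp only [Finset.mem_Icc]; omega
      · intro j hj; simp only [Finset.mem_Icc] at hj; omega
      · intro m _; omega
      · intro j hj; simp only [Finset.mem_Icc] at hj
        have h1 : j - 1 + 1 = j := by omega
        rw [h1]
    rw [hL]
    simp only [pow_zero, Nat.choose_zero_right, Nat.sub_zero, Nat.cast_one, one_mul, mul_one]
    have hr : ∀ B : ℝ, x ^ k - (B + x ^ k) = -B := fun B => by ring
    rw [hr]
    rw [← Finset.sum_neg_distrib]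
    refine Finset.sum_congr rfl fun m _ => ?_
    rw [pow_succ]; ring
  -- the tail product
  set Q : ℕ → ℝ := fun i => ∏ j ∈ Finset.Icc i (n - 1), (1 - q ^ j) with hQ
  have hQn : Q n = 1 := by
    have : Finset.Icc n (n - 1) = ∅ := Finset.Icc_eq_empty_of_lt (by omega)
    simp [hQ, this]
  have hQstep : ∀ i, i < n → Q i = (1 - q ^ i) * Q (i + 1) := by
    intro i hi
    have hIco : ∀ m : ℕ, Finset.Icc m (n - 1) = Finset.Ico m n := by
      intro m
      ext x
      simp only [Finset.mem_Icc, Finset.mem_Ico]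
      omega
    simp only [hQ, hIco]
    exact Finset.prod_eq_prod_Ico_succ_bot hi _
  -- telescoping / Abel summation
  have tel : ∀ m : ℕ, ∑ i ∈ Finset.range m, (i : ℝ) ^ k * (Q (i + 1) - Q i)
      = (m : ℝ) ^ k * Q m
        - ∑ i ∈ Finset.Icc 1 m, ((i : ℝ) ^ k - ((i : ℝ) - 1) ^ k) * Q i := by
    intro m
    induction m with
    | zero => simp [zero_pow (by omega : k ≠ 0)]
    | succ m ih =>
      rw [Finset.sum_range_succ, ih, Finset.sum_Icc_succ_top (by omega : 1 ≤ m + 1)]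
      push_cast
      ring
  -- reindex the main sum
  have reidx : ∑ h ∈ Finset.Icc 1 n, ((n - h : ℕ) : ℝ) ^ k * q ^ (n - h) *
        ∏ j ∈ Finset.Icc 1 (h - 1), (1 - q ^ (n - j))
      = ∑ i ∈ Finset.range n, (i : ℝ) ^ k * q ^ i * Q (i + 1) := by
    refine Finset.sum_nbij' (fun h => n - h) (fun i => n - i) ?_ ?_ ?_ ?_ ?_
    · intro h hh; simp only [Finset.mem_Icc] at hh; simp only [Finset.mem_range]; omega
    · intro i hi; simp only [Finset.mem_range] at hi; simp only [Finset.mem_Icc]; omega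
    · intro h hh; simp only [Finset.mem_Icc] at hh; omega
    · intro i hi; simp only [Finset.mem_range] at hi; omega
    · intro h hh; simp only [Finset.mem_Icc] at hh
      congr 1
      -- product identity
      refine Finset.prod_nbij' (fun j => n - j) (fun j => n - j) ?_ ?_ ?_ ?_ ?_
      · intro j hj; simp only [Finset.mem_Icc] at hj ⊢; omega
      · intro j hj; simp only [Finset.mem_Icc] at hj ⊢; omega
      · intro j hj; simp only [Finset.mem_Icc] at hj; omega
      · intro j hj; simp only [Finset.mem_Icc] at hj; omega
      · intro j hj; simp only [Finset.mem_Icc] at hj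
        rfl
  rw [reidx]
  have step2 : ∑ i ∈ Finset.range n, (i : ℝ) ^ k * q ^ i * Q (i + 1)
      = ∑ i ∈ Finset.range n, (i : ℝ) ^ k * (Q (i + 1) - Q i) := by
    refine Finset.sum_congr rfl fun i hi => ?_
    rw [hQstep i (Finset.mem_range.mp hi)]
    ring
  rw [step2, tel n, hQn, mul_one, ha]
  congr 1
  refine Finset.sum_congr rfl fun i _ => ?_
  rw [hf, key]
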